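/- Let 𝓡 be a weakly reversible reaction network on d species. Let z ∈ ℤ^d_{≥0} and suppose z + w is reachable from z for some w ∈ ℤ^d_{≥0} with (w)_i > 0 for every i. Then for any choice of nonnegative integers d^{y→y'} (one for each reaction y → y' ∈ 𝓡) satisfying Σ_{y→y' ∈ 𝓡} d^{y→y'}(y' − y) ≥ 0 componentwise, the state z + Σ_{y→y' ∈ 𝓡} d^{y→y'}(y' − y) is reachable from z. -/

import Mathlib

open Filter Finset

/-- A reaction network on `d` species: every reaction has a nonnegative source complex and
a nonnegative product complex, and the source differs from the product. -/
def IsRN (d : ℕ) (Rn : Finset ((Fin d → ℤ) × (Fin d → ℤ))) : Prop :=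
  ∀ r ∈ Rn, (∀ i, 0 ≤ r.1 i) ∧ (∀ i, 0 ≤ r.2 i) ∧ r.1 ≠ r.2

/-- Mass-action intensity `λ_y(x) = ∏ i, x_i!/(x_i - y_i)!` if `x ≥ y` componentwise, else `0`. -/
def intensity (d : ℕ) (y x : Fin d → ℤ) : ℕ :=
  if ∀ i, y i ≤ x i then ∏ i : Fin d, Nat.descFactorial (x i).toNat ((y i).toNat) else 0

/-- Cyclic successor on `{1, …, M}`: `cyc M m = m + 1` for `m < M` and `cyc M M = 1`. -/
def cyc (M m : ℕ) : ℕ := if m = M then 1 else m + 1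

/-- `xshift d ystar x m n = x^m_n = x_n + ∑_{j=1}^{m-1} (y*_{j+1} - y*_j)`. -/
def xshift (d : ℕ) (ystar : ℕ → Fin d → ℤ) (x : ℕ → Fin d → ℤ) (m n : ℕ) : Fin d → ℤ :=
  fun i => x n i + ∑ j ∈ Finset.Ico 1 m, (ystar (j + 1) i - ystar j i)

/-- The ordered list `(y*_1 → y*_2, …, y*_M → y*_1)` consists of reactions of the network. -/
def IsCycleIn (d : ℕ) (Rn : Finset ((Fin d → ℤ) × (Fin d → ℤ))) (M : ℕ)
    (ystar : ℕ → Fin d → ℤ) : Prop :=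
  ∀ m, 1 ≤ m → m ≤ M → (ystar m, ystar (cyc M m)) ∈ Rn

/-- Condition (ii) of a strong tier-1 cycle, with explicit witness `m0`. -/
def TierLimits (d : ℕ) (Rn : Finset ((Fin d → ℤ) × (Fin d → ℤ))) (M : ℕ)
    (ystar : ℕ → Fin d → ℤ) (x : ℕ → Fin d → ℤ) (m0 : ℕ) : Prop :=
  ∀ m, 1 ≤ m → m ≤ M → ∀ y y' : Fin d → ℤ, (y, y') ∈ Rn →
    (y, y') ≠ (ystar m, ystar (cyc M m)) →
    Tendsto (fun n =>
        ((intensity d (ystar m0) (xshift d ystar x m0 n) : ℝ) *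
          (intensity d y (xshift d ystar x m n) : ℝ)) /
          (intensity d (ystar m) (xshift d ystar x m n) : ℝ))
      atTop (nhds 0)

/-- `R = (y*_1 → y*_2, …, y*_M → y*_1)` is a strong tier-1 cycle along `x`. -/
def IsStrongT1Cycle (d : ℕ) (Rn : Finset ((Fin d → ℤ) × (Fin d → ℤ))) (M : ℕ)
    (ystar : ℕ → Fin d → ℤ) (x : ℕ → Fin d → ℤ) : Prop :=
  IsCycleIn d Rn M ystar ∧
  (∀ n, 0 < intensity d (ystar 1) (x n)) ∧
  ∃ m0, 1 ≤ m0 ∧ m0 ≤ M ∧ TierLimits d Rn M ystar x m0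

/-- `y` is a source complex of the network. -/
def IsSourceIn (d : ℕ) (Rn : Finset ((Fin d → ℤ) × (Fin d → ℤ))) (y : Fin d → ℤ) : Prop :=
  ∃ y', (y, y') ∈ Rn

/-- `y` is a complex (source or product) of the network. -/
def ComplexOf (d : ℕ) (Rn : Finset ((Fin d → ℤ) × (Fin d → ℤ))) (y : Fin d → ℤ) : Prop :=
  ∃ r ∈ Rn, r.1 = y ∨ r.2 = y

/-- Tier sequence of a reaction network. -/
def IsTierSeq (d : ℕ) (Rn : Finset ((Fin d → ℤ) × (Fin d → ℤ)))
    (x : ℕ → Fin d → ℤ) : Prop :=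
  (∀ n i, 0 ≤ x n i) ∧
  (∃ i, Tendsto (fun n => x n i) atTop atTop) ∧
  (∀ i, (Tendsto (fun n => x n i) atTop atTop ∧ Monotone fun n => x n i) ∨
      (∃ c : ℤ, ∀ n, x n i = c)) ∧
  (∀ y y' : Fin d → ℤ, IsSourceIn d Rn y → IsSourceIn d Rn y' →
    (Tendsto (fun n => (intensity d y (x n) : ℝ) / (intensity d y' (x n) : ℝ)) atTop atTop ∨
      ∃ c : ℝ, Tendsto (fun n => (intensity d y (x n) : ℝ) / (intensity d y' (x n) : ℝ))
        atTop (nhds c)))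

/-- One reaction step: some reaction `y → y'` with `y ≤ a` fires, giving `b = a + y' - y`. -/
def ReactStep (d : ℕ) (Rn : Finset ((Fin d → ℤ) × (Fin d → ℤ)))
    (a b : Fin d → ℤ) : Prop :=
  ∃ r ∈ Rn, (∀ i, r.1 i ≤ a i) ∧ b = fun i => a i + (r.2 i - r.1 i)

/-- `w` is reachable from `z` by finitely many reaction steps. -/
def Reachable (d : ℕ) (Rn : Finset ((Fin d → ℤ) × (Fin d → ℤ)))
    (z w : Fin d → ℤ) : Prop :=
  Relation.ReflTransGen (ReactStep d Rn) z w

/-- Weak reversibility: every reaction lies on a directed cycle of reactions. -/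
def WeaklyReversible (d : ℕ) (Rn : Finset ((Fin d → ℤ) × (Fin d → ℤ))) : Prop :=
  ∀ r ∈ Rn, ∃ (K : ℕ) (ys : ℕ → Fin d → ℤ), 2 ≤ K ∧
    ys 1 = r.1 ∧ ys 2 = r.2 ∧
    (∀ j, 1 ≤ j → j < K → (ys j, ys (j + 1)) ∈ Rn) ∧
    (ys K, ys 1) ∈ Rn


section Aux

variable {d : ℕ} {Rn : Finset ((Fin d → ℤ) × (Fin d → ℤ))}

/-- Translation: reachability is preserved by adding a nonnegative vector. -/
lemma reach_add {a b : Fin d → ℤ} (v : Fin d → ℤ) (hv : ∀ i, 0 ≤ v i)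
    (h : Reachable d Rn a b) :
    Reachable d Rn (fun i => a i + v i) (fun i => b i + v i) := by
  induction h with
  | refl => exact .refl
  | tail hab hbc IH =>
    obtain ⟨r, hr, hle, rfl⟩ := hbc
    refine IH.tail ⟨r, hr, fun i => ?_, funext fun i => by dsimp only; ring⟩
    show r.1 i ≤ _ + v i
    have := hv i; have := hle i; linarith

/-- Reversal of a single step, using weak reversibility. -/
lemma rev_step (hRn : IsRN d Rn) (hwr : WeaklyReversible d Rn) {a b : Fin d → ℤ}
    (h : ReactStep d Rn a b) : Reachable d Rn b a := by
  obtain ⟨r, hr, hle, rfl⟩ := h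
  obtain ⟨K, ys, hK, h1, h2, hmid, hlast⟩ := hwr r hr
  have hle1 : ∀ i, ys 1 i ≤ a i := by rw [h1]; exact hle
  have key : ∀ j, 2 ≤ j → j ≤ K →
      Reachable d Rn (fun i => a i + (r.2 i - r.1 i)) (fun i => a i + (ys j i - ys 1 i)) := by
    intro j hj2
    induction j, hj2 using Nat.le_induction with
    | base =>
      intro _
      have : (fun i => a i + (r.2 i - r.1 i)) = fun i => a i + (ys 2 i - ys 1 i) := by
        funext i; rw [h1, h2]
      rw [this]
      exact .refl
    | succ j hj IH =>
      intro hjK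
      have hj1 : 1 ≤ j := by omega
      have hjK' : j < K := by omega
      refine (IH (by omega)).tail ⟨(ys j, ys (j + 1)), hmid j hj1 hjK', fun i => ?_,
        funext fun i => by show a i + (ys (j+1) i - ys 1 i) = _; dsimp only; ring⟩
      show ys j i ≤ a i + (ys j i - ys 1 i)
      have := hle1 i; linarith
  have final := (key K (by omega) le_rfl).tail
    (⟨(ys K, ys 1), hlast, fun i => by
        show ys K i ≤ a i + (ys K i - ys 1 i); have := hle1 i; linarith,
      funext fun i => rfl⟩ :
      ReactStep d Rn (fun i => a i + (ys K i - ys 1 i))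
        (fun i => (a i + (ys K i - ys 1 i)) + (ys 1 i - ys K i)))
  have : (fun i => (a i + (ys K i - ys 1 i)) + (ys 1 i - ys K i)) = a := by
    funext i; ring
  rwa [this] at final

/-- Reachability is symmetric under weak reversibility. -/
lemma reach_symm (hRn : IsRN d Rn) (hwr : WeaklyReversible d Rn) {a b : Fin d → ℤ}
    (h : Reachable d Rn a b) : Reachable d Rn b a := by
  induction h with
  | refl => exact .refl
  | tail hab hbc IH => exact (rev_step hRn hwr hbc).trans IH

/-- From a sufficiently large state, any nonnegative combination of reactions can be fired. -/
lemma fire (hRn : IsRN d Rn) :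
    ∀ (N : ℕ) (c : ((Fin d → ℤ) × (Fin d → ℤ)) → ℕ), ∑ r ∈ Rn, c r = N →
    ∃ M : ℤ, 0 ≤ M ∧ ∀ u : Fin d → ℤ, (∀ i, M ≤ u i) →
      Reachable d Rn u (fun i => u i + ∑ r ∈ Rn, (c r : ℤ) * (r.2 i - r.1 i)) := by
  intro N
  induction N with
  | zero =>
    intro c hc
    refine ⟨0, le_rfl, fun u hu => ?_⟩
    have hz : ∀ r ∈ Rn, c r = 0 := by
      intro r hr
      exact (Finset.sum_eq_zero_iff.mp hc) r hr
    have : (fun i => u i + ∑ r ∈ Rn, (c r : ℤ) * (r.2 i - r.1 i)) = u := by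
      funext i
      rw [Finset.sum_eq_zero (fun r hr => by rw [hz r hr]; simp)]
      ring
    rw [this]
    exact .refl
  | succ N IH =>
    intro c hc
    have hex : ∃ r0 ∈ Rn, 0 < c r0 := by
      by_contra hcon
      push_neg at hcon
      have : ∑ r ∈ Rn, c r = 0 :=
        Finset.sum_eq_zero fun r hr => Nat.le_zero.mp (hcon r hr)
      omega
    obtain ⟨r0, hr0, hpos⟩ := hex
    set c' := Function.update c r0 (c r0 - 1) with hc'def
    have hsum' : ∑ r ∈ Rn, c' r = N := by
      rw [hc'def, Finset.sum_update_of_mem hr0, Finset.sdiff_singleton_eq_erase]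
      have := Finset.add_sum_erase Rn c hr0
      omega
    obtain ⟨M', hM'0, hIH⟩ := IH c' hsum'
    set B : ℤ := ∑ r ∈ Rn, ∑ i, r.1 i with hBdef
    have hBr : ∀ r ∈ Rn, ∀ i, r.1 i ≤ B := by
      intro r hr i
      have h1 : r.1 i ≤ ∑ j, r.1 j :=
        Finset.single_le_sum (fun j _ => (hRn r hr).1 j) (Finset.mem_univ i)
      have h2 : ∑ j, r.1 j ≤ B :=
        Finset.single_le_sum
          (fun s hs => Finset.sum_nonneg fun j _ => (hRn s hs).1 j) hr
      linarith
    have hB0 : 0 ≤ B :=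
      Finset.sum_nonneg fun s hs => Finset.sum_nonneg fun j _ => (hRn s hs).1 j
    refine ⟨M' + B, by linarith, fun u hu => ?_⟩
    have hstep : ReactStep d Rn u (fun i => u i + (r0.2 i - r0.1 i)) :=
      ⟨r0, hr0, fun i => by have := hBr r0 hr0 i; have := hu i; linarith, rfl⟩
    have hu' : ∀ i, M' ≤ u i + (r0.2 i - r0.1 i) := by
      intro i
      have := hBr r0 hr0 i; have := hu i; have := (hRn r0 hr0).2.1 i; linarith
    have hrest := hIH (fun i => u i + (r0.2 i - r0.1 i)) hu'
    have heq : (fun i => (u i + (r0.2 i - r0.1 i)) + ∑ r ∈ Rn, (c' r : ℤ) * (r.2 i - r.1 i))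
        = fun i => u i + ∑ r ∈ Rn, (c r : ℤ) * (r.2 i - r.1 i) := by
      funext i
      have e1 : ∑ r ∈ Rn, (c' r : ℤ) * (r.2 i - r.1 i)
          = ((c r0 - 1 : ℕ) : ℤ) * (r0.2 i - r0.1 i)
            + ∑ r ∈ Rn.erase r0, (c r : ℤ) * (r.2 i - r.1 i) := by
        rw [← Finset.add_sum_erase _ _ hr0]
        congr 1
        · rw [hc'def]; simp
        · refine Finset.sum_congr rfl fun r hr => ?_
          rw [hc'def, Function.update_of_ne (Finset.ne_of_mem_erase hr)]
      have e2 : ∑ r ∈ Rn, (c r : ℤ) * (r.2 i - r.1 i)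
          = (c r0 : ℤ) * (r0.2 i - r0.1 i)
            + ∑ r ∈ Rn.erase r0, (c r : ℤ) * (r.2 i - r.1 i) :=
        (Finset.add_sum_erase _ _ hr0).symm
      have e3 : ((c r0 - 1 : ℕ) : ℤ) = (c r0 : ℤ) - 1 := by
        have : 1 ≤ c r0 := hpos
        push_cast [Nat.cast_sub this]
        ring
      rw [e1, e2, e3]; ring
    rw [heq] at hrest
    exact hrest.head hstep

end Aux

/-- Accessibility lemma: in a weakly reversible network, if `z + w` with `w > 0` is reachable
from `z`, then `z + Σ_r d^r (y'_r - y_r)` is reachable from `z` for any nonnegative integers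
`d^r` whose net effect is nonnegative. -/
theorem stmt12 {d : ℕ} (hd : 1 ≤ d)
    (Rn : Finset ((Fin d → ℤ) × (Fin d → ℤ))) (hRn : IsRN d Rn)
    (hwr : WeaklyReversible d Rn)
    (z w : Fin d → ℤ) (hz : ∀ i, 0 ≤ z i) (hw : ∀ i, 0 < w i)
    (hreach : Reachable d Rn z (fun i => z i + w i))
    (c : ((Fin d → ℤ) × (Fin d → ℤ)) → ℕ)
    (hc : ∀ i, 0 ≤ ∑ r ∈ Rn, (c r : ℤ) * (r.2 i - r.1 i)) :
    Reachable d Rn z (fun i => z i + ∑ r ∈ Rn, (c r : ℤ) * (r.2 i - r.1 i)) := by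
  have hw0 : ∀ i, 0 ≤ w i := fun i => le_of_lt (hw i)
  -- z reaches z + M·w for every natural M
  have multiW : ∀ M : ℕ, Reachable d Rn z (fun i => z i + (M : ℤ) * w i) := by
    intro M
    induction M with
    | zero => simpa [Reachable] using (Relation.ReflTransGen.refl : Reachable d Rn z z)
    | succ M IH =>
      have htr := reach_add (Rn := Rn) (fun i => (M : ℤ) * w i)
        (fun i => mul_nonneg (by positivity) (hw0 i)) hreach
      have heq : (fun i => (z i + w i) + (M : ℤ) * w i)
          = fun i => z i + ((M : ℕ) + 1 : ℤ) * w i := by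
        funext i; push_cast; ring
      rw [heq] at htr
      have := IH.trans htr
      simpa [Reachable] using this
  obtain ⟨M0, hM00, hfire⟩ := fire hRn (∑ r ∈ Rn, c r) c rfl
  set M : ℕ := M0.toNat with hMdef
  have hM0le : M0 ≤ (M : ℤ) := Int.self_le_toNat M0
  set u : Fin d → ℤ := fun i => z i + (M : ℤ) * w i with hudef
  have hu : ∀ i, M0 ≤ u i := by
    intro i
    have h1 : (1 : ℤ) ≤ w i := hw i
    have h2 : (M : ℤ) * 1 ≤ (M : ℤ) * w i :=
      mul_le_mul_of_nonneg_left h1 (by positivity)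
    have := hz i
    simp only [hudef]
    nlinarith
  have A : Reachable d Rn z u := multiW M
  have B : Reachable d Rn u (fun i => u i + ∑ r ∈ Rn, (c r : ℤ) * (r.2 i - r.1 i)) :=
    hfire u hu
  have C : Reachable d Rn (fun i => z i + ∑ r ∈ Rn, (c r : ℤ) * (r.2 i - r.1 i))
      (fun i => u i + ∑ r ∈ Rn, (c r : ℤ) * (r.2 i - r.1 i)) := by
    have := reach_add (Rn := Rn)
      (fun i => ∑ r ∈ Rn, (c r : ℤ) * (r.2 i - r.1 i)) hc (multiW M)
    have heq1 : (fun i => z i + ∑ r ∈ Rn, (c r : ℤ) * (r.2 i - r.1 i)) =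
        (fun i => z i + ∑ r ∈ Rn, (c r : ℤ) * (r.2 i - r.1 i)) := rfl
    have heq2 : (fun i => (z i + (M : ℤ) * w i) + ∑ r ∈ Rn, (c r : ℤ) * (r.2 i - r.1 i))
        = fun i => u i + ∑ r ∈ Rn, (c r : ℤ) * (r.2 i - r.1 i) := by
      funext i; simp [hudef]
    rwa [heq2] at this
  exact (A.trans B).trans (reach_symm hRn hwr C)
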